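/- Let X, A, B be real matrices such that the equation X = A Z B has a solution in Z. Then the optimization problem minimizing ‖Z‖_* subject to X = A Z B has a unique minimizer, which admits a closed form: if A has full column-space SVD data U_A, Σ_A, V_A^T (skinny SVD A = U_A Σ_A V_A^T) and B = U_B Σ_B V_B^T (skinny SVD), then Z* = V_A Σ_A^{-1} U_A^T X V_B Σ_B^{-1} U_B^T, i.e., Z* = A^+ X B^+ where A^+ and B^+ are Moore–Penrose pseudoinverses. -/

import Mathlib

open Matrix

/-- The nuclear norm of a real matrix: the sum of its singular values,
i.e. the sum of the square roots of the eigenvalues of `Mᵀ * M`. -/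
noncomputable def nuclearNorm {m n : Type*} [Fintype m] [Fintype n] [DecidableEq n]
    (M : Matrix m n ℝ) : ℝ :=
  ∑ i, Real.sqrt ((show (Mᵀ * M).IsHermitian by simpa using Matrix.isHermitian_conjTranspose_mul_self M).eigenvalues i)

set_option linter.unusedSectionVars false

namespace NNAux

open Matrix
open scoped MatrixOrder


variable {n : Type*} [Fintype n] [DecidableEq n]

/-- sum of square roots of eigenvalues of a hermitian real matrix -/
noncomputable def tn {S : Matrix n n ℝ} (hS : S.IsHermitian) : ℝ :=
  ∑ i, Real.sqrt (hS.eigenvalues i)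

lemma tn_congr {S S' : Matrix n n ℝ} (h : S = S') (hS : S.IsHermitian) (hS' : S'.IsHermitian) :
    tn hS = tn hS' := by subst h; rfl

lemma trace_unitary_diag (U : Matrix.unitaryGroup n ℝ) (d : n → ℝ) :
    ((U : Matrix n n ℝ) * diagonal d * star (U : Matrix n n ℝ)).trace = ∑ i, d i := by
  rw [trace_mul_cycle, Unitary.coe_star_mul_self, Matrix.one_mul,
    trace_diagonal]

lemma trace_sqrt {S : Matrix n n ℝ} (hS : S.PosSemidef) :
    (CFC.sqrt S).trace = tn hS.1 := by
  rw [CFC.sqrt_eq_cfc, cfc_nnreal_eq_real _ S, hS.1.cfc_eq, IsHermitian.cfc,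
    Unitary.conjStarAlgAut_apply, trace_unitary_diag]
  refine Finset.sum_congr rfl fun i _ => ?_
  simp [Real.coe_sqrt, hS.eigenvalues_nonneg i]

lemma trace_eq_tn_of_sq {S G : Matrix n n ℝ} (hS : S.PosSemidef) (hG : G.PosSemidef)
    (h : G * G = S) : G.trace = tn hS.1 := by
  rw [← (CFC.sqrt_eq_iff S G hS.nonneg hG.nonneg).mpr h, trace_sqrt hS]


variable {n : Type*} [Fintype n] [DecidableEq n]

lemma trace_nonneg {S : Matrix n n ℝ} (hS : S.PosSemidef) : 0 ≤ S.trace := by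
  exact hS.trace_nonneg

lemma trace_mul_nonneg {P Q : Matrix n n ℝ} (hP : P.PosSemidef) (hQ : Q.PosSemidef) :
    0 ≤ (P * Q).trace := by
  obtain ⟨B, rfl⟩ : ∃ B : Matrix n n ℝ, Q = Bᴴ * B :=
    ⟨CFC.sqrt Q, by rw [(CFC.sqrt_nonneg Q).posSemidef.1.eq, CFC.sqrt_mul_sqrt_self Q hQ.nonneg]⟩
  rw [← Matrix.mul_assoc, trace_mul_cycle]
  exact trace_nonneg (hP.mul_mul_conjTranspose_same B)


variable {n : Type*} [Fintype n] [DecidableEq n]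

lemma star_mul_cancel (U : Matrix.unitaryGroup n ℝ) (X : Matrix n n ℝ) :
    star (U : Matrix n n ℝ) * ((U : Matrix n n ℝ) * X) = X := by
  rw [← Matrix.mul_assoc, Unitary.coe_star_mul_self, Matrix.one_mul]

lemma conj_mul (U : Matrix.unitaryGroup n ℝ) (d e : n → ℝ) :
    ((U : Matrix n n ℝ) * diagonal d * star (U : Matrix n n ℝ)) *
      ((U : Matrix n n ℝ) * diagonal e * star (U : Matrix n n ℝ)) =
    (U : Matrix n n ℝ) * diagonal (fun i => d i * e i) * star (U : Matrix n n ℝ) := by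
  simp only [Matrix.mul_assoc, star_mul_cancel]
  rw [← Matrix.mul_assoc (diagonal d), diagonal_mul_diagonal]

lemma psd_conj (U : Matrix.unitaryGroup n ℝ) {d : n → ℝ} (hd : ∀ i, 0 ≤ d i) :
    ((U : Matrix n n ℝ) * diagonal d * star (U : Matrix n n ℝ)).PosSemidef := by
  simpa [Matrix.star_eq_conjTranspose] using
    (Matrix.PosSemidef.diagonal (fun i => hd i)).mul_mul_conjTranspose_same (U : Matrix n n ℝ)

variable {n : Type*} [Fintype n] [DecidableEq n]

lemma mul_star_cancel_one (U : Matrix.unitaryGroup n ℝ) :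
    (U : Matrix n n ℝ) * star (U : Matrix n n ℝ) = 1 := by
  rw [← Unitary.coe_star]; exact Unitary.coe_mul_star_self U

lemma aux_div (x ε : ℝ) (hx : 0 ≤ x) (hε : 0 < ε) :
    (Real.sqrt x + ε)⁻¹ * x ≤ Real.sqrt x := by
  rw [inv_mul_le_iff₀ (by positivity)]
  nlinarith [Real.sq_sqrt hx, Real.sqrt_nonneg x]

lemma key_estimate {r : Type*} [Fintype r] (M : Matrix n n ℝ) (hM : M.PosSemidef)
    (K : Matrix r n ℝ) (hS : (M + Kᴴ * K).PosSemidef) (ε : ℝ) (hε : 0 < ε) :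
    2 * tn hM.1 ≤ 2 * tn hS.1 + ε * (Fintype.card n : ℝ)
      - (tn hS.1 + ε)⁻¹ * (Kᴴ * K).trace := by
  set S := M + Kᴴ * K with hSdef
  set U := hS.1.eigenvectorUnitary with hU
  set lam := hS.1.eigenvalues with hlam
  have hlam0 : ∀ i, 0 ≤ lam i := hS.eigenvalues_nonneg
  set b := tn hS.1 with hb
  have hb0 : 0 ≤ b := Finset.sum_nonneg fun i _ => Real.sqrt_nonneg _
  have hbi : ∀ i, Real.sqrt (lam i) ≤ b := fun i =>
    Finset.single_le_sum (f := fun i => Real.sqrt (lam i))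
      (fun j _ => Real.sqrt_nonneg _) (Finset.mem_univ i)
  have hspec : S = (U : Matrix n n ℝ) * diagonal lam * star (U : Matrix n n ℝ) := by
    have := hS.1.spectral_theorem
    exact this
  set dT : n → ℝ := fun i => Real.sqrt (lam i) + ε with hdT
  set dT' : n → ℝ := fun i => (Real.sqrt (lam i) + ε)⁻¹ with hdT'
  have hdTpos : ∀ i, 0 < dT i := fun i => by
    have := Real.sqrt_nonneg (lam i); simp only [hdT]; linarith
  have hdT'pos : ∀ i, 0 < dT' i := fun i => by
    have := hdTpos i; simp only [hdT'] at *; positivity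
  set T := (U : Matrix n n ℝ) * diagonal dT * star (U : Matrix n n ℝ) with hT
  set T' := (U : Matrix n n ℝ) * diagonal dT' * star (U : Matrix n n ℝ) with hT'
  have hdd' : (fun i => dT i * dT' i) = fun _ => (1:ℝ) := by
    funext i; exact mul_inv_cancel₀ (ne_of_gt (hdTpos i))
  have hd'd : (fun i => dT' i * dT i) = fun _ => (1:ℝ) := by
    funext i; exact inv_mul_cancel₀ (ne_of_gt (hdTpos i))
  have hone : diagonal (fun _ : n => (1:ℝ)) = 1 := Matrix.diagonal_one
  have hTT' : T * T' = 1 := by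
    rw [hT, hT', conj_mul, hdd', hone, Matrix.mul_one, mul_star_cancel_one]
  have hT'T : T' * T = 1 := by
    rw [hT, hT', conj_mul, hd'd, hone, Matrix.mul_one, mul_star_cancel_one]
  set G := CFC.sqrt M with hG
  have hGpsd : G.PosSemidef := (CFC.sqrt_nonneg M).posSemidef
  have hGG : G * G = M := CFC.sqrt_mul_sqrt_self M hM.nonneg
  have htrG : G.trace = tn hM.1 := trace_eq_tn_of_sq hM hGpsd hGG
  have hTpsd : T.PosSemidef := psd_conj U fun i => (hdTpos i).le
  have hT'psd : T'.PosSemidef := psd_conj U fun i => (hdT'pos i).le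
  have hRpsd : ((T - G) * T' * (T - G)).PosSemidef := by
    have := hT'psd.mul_mul_conjTranspose_same (T - G)
    rwa [conjTranspose_sub, hTpsd.1, hGpsd.1] at this
  have hRtr : 0 ≤ ((T - G) * T' * (T - G)).trace := trace_nonneg hRpsd
  have hexp : (T - G) * T' * (T - G) = T - G - G + G * T' * G := by
    rw [sub_mul, sub_mul, mul_sub, mul_sub, hTT', Matrix.mul_assoc G T' T, hT'T,
      Matrix.one_mul, Matrix.one_mul, Matrix.mul_one]
    abel
  have h5 : (G * T' * G).trace = (T' * M).trace := by
    rw [← hGG, trace_mul_comm (G * T') G, ← Matrix.mul_assoc, trace_mul_comm]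
  have hA : 2 * tn hM.1 ≤ T.trace + (T' * M).trace := by
    rw [hexp, trace_add, trace_sub, trace_sub, h5, htrG] at hRtr
    linarith
  have htrT : T.trace = b + ε * (Fintype.card n : ℝ) := by
    rw [hT, trace_unitary_diag]
    simp only [hdT, Finset.sum_add_distrib, Finset.sum_const, Finset.card_univ, nsmul_eq_mul,
      hb]
    simp only [tn, ← hlam]
    ring
  have htrT'S : (T' * S).trace ≤ b := by
    rw [hspec, hT', conj_mul, trace_unitary_diag]
    refine Finset.sum_le_sum fun i _ => ?_
    exact aux_div (lam i) ε (hlam0 i) hε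
  have hq0 : 0 ≤ (Kᴴ * K).trace := trace_nonneg (posSemidef_conjTranspose_mul_self K)
  set q := (Kᴴ * K).trace with hqdef
  set c : ℝ := (b + ε)⁻¹ with hc
  have hbe : 0 < b + ε := by linarith
  have hdiagc : diagonal (fun _ : n => c) = c • (1 : Matrix n n ℝ) := by
    rw [Matrix.smul_one_eq_diagonal]
  have hsub : T' - c • 1 = (U : Matrix n n ℝ) * diagonal (fun i => dT' i - c)
      * star (U : Matrix n n ℝ) := by
    have hd : diagonal (fun i => dT' i - c) =
        diagonal dT' - diagonal (fun _ : n => c) := by rw [← diagonal_sub]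
    rw [hd, Matrix.mul_sub, Matrix.sub_mul, ← hT', hdiagc, Matrix.mul_smul, Matrix.mul_one,
      Matrix.smul_mul, mul_star_cancel_one]
  have hsubpsd : (T' - c • 1).PosSemidef := by
    rw [hsub]
    refine psd_conj U fun i => ?_
    have h1 : dT i ≤ b + ε := by
      simp only [hdT]; have := hbi i; linarith
    have h2 := inv_anti₀ (hdTpos i) h1
    simp only [hdT', hc] at *
    linarith
  have htrT'K : c * q ≤ (T' * (Kᴴ * K)).trace := by
    have h0 := trace_mul_nonneg hsubpsd (posSemidef_conjTranspose_mul_self K)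
    rw [Matrix.sub_mul, trace_sub, Matrix.smul_mul, Matrix.one_mul, trace_smul,
      smul_eq_mul] at h0
    linarith
  have hT'M : (T' * M).trace = (T' * S).trace - (T' * (Kᴴ * K)).trace := by
    have hMS : M = S - Kᴴ * K := by rw [hSdef]; abel
    rw [hMS, Matrix.mul_sub, trace_sub]
  linarith

variable {n : Type*} [Fintype n] [DecidableEq n]

lemma trace_conj_self {r : Type*} [Fintype r] (K : Matrix r n ℝ) :
    (Kᴴ * K).trace = ∑ j, ∑ i, (K i j)^2 := by
  simp [Matrix.trace, Matrix.diag, Matrix.mul_apply, Matrix.conjTranspose_apply, pow_two]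

lemma key {r : Type*} [Fintype r] (M : Matrix n n ℝ) (hM : M.PosSemidef)
    (K : Matrix r n ℝ) (hS : (M + Kᴴ * K).PosSemidef) :
    tn hM.1 ≤ tn hS.1 ∧ (tn hM.1 = tn hS.1 → K = 0) := by
  set N : ℝ := (Fintype.card n : ℝ) with hN
  have hN0 : 0 ≤ N := Nat.cast_nonneg _
  set b := tn hS.1 with hb
  have hb0 : 0 ≤ b := Finset.sum_nonneg fun i _ => Real.sqrt_nonneg _
  have hq0 : 0 ≤ (Kᴴ * K).trace := trace_nonneg (posSemidef_conjTranspose_mul_self K)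
  set q := (Kᴴ * K).trace with hq
  constructor
  · refine le_of_forall_pos_le_add fun ε hε => ?_
    set ε' := 2 * ε / (N + 1) with hε'
    have hε'pos : 0 < ε' := by positivity
    have hkey := key_estimate M hM K hS ε' hε'pos
    have hinv : 0 ≤ (b + ε')⁻¹ := by positivity
    have hc : 0 ≤ (b + ε')⁻¹ * q := mul_nonneg hinv hq0
    have hx : ε' * (N + 1) = 2 * ε := by
      rw [hε']; field_simp
    have hx2 : ε' * (N + 1) = ε' * N + ε' := by ring
    linarith
  · intro heq
    by_contra hK
    have hij : ∃ i j, K i j ≠ 0 := by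
      by_contra h
      push_neg at h
      exact hK (by ext i j; simpa using h i j)
    obtain ⟨i0, j0, hij⟩ := hij
    have hqpos : 0 < q := by
      rw [hq, trace_conj_self]
      refine Finset.sum_pos' (fun j _ => Finset.sum_nonneg fun i _ => sq_nonneg _)
        ⟨j0, Finset.mem_univ _, ?_⟩
      refine Finset.sum_pos' (fun i _ => sq_nonneg _) ⟨i0, Finset.mem_univ _, ?_⟩
      exact lt_of_le_of_ne (sq_nonneg _) (Ne.symm (pow_ne_zero 2 hij))
    set ε := min 1 (q / ((b + 1) * (N + 1))) with hεdef
    have hεpos : 0 < ε := lt_min one_pos (by positivity)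
    have hε1 : ε ≤ 1 := min_le_left _ _
    have hε2 : ε ≤ q / ((b + 1) * (N + 1)) := min_le_right _ _
    have hkey := key_estimate M hM K hS ε hεpos
    rw [← hb, ← hN, ← hq] at hkey
    rw [heq] at hkey
    have h1 : (b + ε)⁻¹ * q ≤ ε * N := by linarith
    have h2 : (b + 1)⁻¹ ≤ (b + ε)⁻¹ := by
      apply inv_anti₀ (by linarith) (by linarith)
    have h3 : (b + 1)⁻¹ * q ≤ ε * N := le_trans (by nlinarith) h1
    have h4 : ε * N ≤ q / ((b + 1) * (N + 1)) * N := by nlinarith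
    have h5 : q / ((b + 1) * (N + 1)) * N < (b + 1)⁻¹ * q := by
      rw [div_mul_eq_mul_div, div_lt_iff₀ (by positivity)]
      have hA : (b + 1)⁻¹ * q * ((b + 1) * (N + 1)) = q * (N + 1) := by
        field_simp
      have hB : q * (N + 1) = q * N + q := by ring
      linarith
    linarith

variable {m n : Type*} [Fintype m] [Fintype n] [DecidableEq n]

lemma mul_star_cancel' {k : Type*} [Fintype k] (U : Matrix.unitaryGroup n ℝ) (X : Matrix n k ℝ) :
    (U : Matrix n n ℝ) * (star (U : Matrix n n ℝ) * X) = X := by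
  rw [← Matrix.mul_assoc, mul_star_cancel_one, Matrix.one_mul]

lemma nn_eq_tn (M : Matrix m n ℝ) (h : (Mᴴ * M).PosSemidef) :
    nuclearNorm M = tn h.1 := by
  have e : Mᵀ * M = Mᴴ * M := by rw [conjTranspose_eq_transpose_of_trivial]
  exact tn_congr e _ _

lemma nn_le_of_orth (W C : Matrix m n ℝ) (h : Cᴴ * (W - C) = 0) :
    nuclearNorm C ≤ nuclearNorm W ∧ (nuclearNorm C = nuclearNorm W → C = W) := by
  set K := W - C with hK
  have hM : (Cᴴ * C).PosSemidef := posSemidef_conjTranspose_mul_self C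
  have h' : Kᴴ * C = 0 := by
    have := congrArg conjTranspose h
    rwa [conjTranspose_mul, conjTranspose_zero] at this
  have hWC : W = C + K := by rw [hK]; abel
  have hWW : Wᴴ * W = Cᴴ * C + Kᴴ * K := by
    rw [hWC, conjTranspose_add, Matrix.add_mul, Matrix.mul_add, Matrix.mul_add, h, h']
    abel
  have hS : (Cᴴ * C + Kᴴ * K).PosSemidef := by
    rw [← hWW]; exact posSemidef_conjTranspose_mul_self W
  obtain ⟨hle, heq⟩ := key (Cᴴ * C) hM K hS
  have e1 : nuclearNorm C = tn hM.1 := nn_eq_tn C hM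
  have e2 : nuclearNorm W = tn hS.1 := by
    rw [nn_eq_tn W (posSemidef_conjTranspose_mul_self W)]
    exact tn_congr hWW _ _
  constructor
  · rw [e1, e2]; exact hle
  · intro hEq
    have : K = 0 := heq (by rw [← e1, ← e2, hEq])
    rw [hK, sub_eq_zero] at this
    exact this.symm

lemma tn_comm (M : Matrix m n ℝ) [DecidableEq m] :
    tn (Matrix.isHermitian_mul_conjTranspose_self M) =
      tn (Matrix.isHermitian_conjTranspose_mul_self M) := by
  set hS : (Mᴴ * M).PosSemidef := posSemidef_conjTranspose_mul_self M with hhS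
  set U := hS.1.eigenvectorUnitary with hU
  set lam := hS.1.eigenvalues with hlam
  have hlam0 : ∀ i, 0 ≤ lam i := hS.eigenvalues_nonneg
  set W := M * (U : Matrix n n ℝ) with hW
  have hdiag : Wᴴ * W = diagonal lam := by
    have h0 : star (U : Matrix n n ℝ) * (Mᴴ * M) * (U : Matrix n n ℝ) = diagonal lam :=
      by
        have := hS.1.conjStarAlgAut_star_eigenvectorUnitary
        simp only [Unitary.conjStarAlgAut_apply, Unitary.coe_star, star_star,
          RCLike.ofReal_real_eq_id, Function.id_comp] at this
        exact this
    rw [hW, conjTranspose_mul, ← Matrix.star_eq_conjTranspose (U : Matrix n n ℝ)]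
    simp only [Matrix.mul_assoc] at h0 ⊢
    exact h0
  have hcol : ∀ k, lam k = 0 → ∀ i, W i k = 0 := by
    intro k hk i
    have h0 : (Wᴴ * W) k k = 0 := by rw [hdiag]; simp [hk]
    rw [mul_apply] at h0
    simp only [conjTranspose_apply, star_trivial] at h0
    have := (Finset.sum_eq_zero_iff_of_nonneg (fun j _ => mul_self_nonneg (W j k))).mp h0
    have := this i (Finset.mem_univ i)
    nlinarith [this]
  set g : n → ℝ := fun i => if lam i = 0 then 0 else (Real.sqrt (lam i))⁻¹ with hg
  have hg0 : ∀ i, 0 ≤ g i := by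
    intro i; rw [hg]; dsimp only
    split
    · exact le_rfl
    · positivity
  set G := W * diagonal g * Wᴴ with hG
  have hGpsd : G.PosSemidef := (Matrix.PosSemidef.diagonal hg0).mul_mul_conjTranspose_same W
  set e : n → ℝ := fun i => if lam i = 0 then (0:ℝ) else 1 with he
  have hWee : W * diagonal e * Wᴴ = W * Wᴴ := by
    ext i j
    rw [Matrix.mul_apply, Matrix.mul_apply]
    refine Finset.sum_congr rfl fun k _ => ?_
    rw [Matrix.mul_diagonal]
    by_cases hk : lam k = 0
    · simp [hcol k hk i]
    · simp [he, hk]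
  have hWWt : W * Wᴴ = M * Mᴴ := by
    rw [hW, conjTranspose_mul, ← Matrix.star_eq_conjTranspose (U : Matrix n n ℝ)]
    simp only [Matrix.mul_assoc, mul_star_cancel']
  have hGG : G * G = M * Mᴴ := by
    have h1 : G * G = W * (diagonal g * (Wᴴ * W) * diagonal g) * Wᴴ := by
      rw [hG]; simp only [Matrix.mul_assoc]
    rw [hdiag, diagonal_mul_diagonal, diagonal_mul_diagonal] at h1
    have hee : (fun i => g i * lam i * g i) = e := by
      funext i
      by_cases hk : lam i = 0
      · simp [hg, he, hk]
      · have hlt : 0 < lam i := lt_of_le_of_ne (hlam0 i) (Ne.symm hk)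
        have hs : Real.sqrt (lam i) ≠ 0 := ne_of_gt (Real.sqrt_pos.mpr hlt)
        have h2 : Real.sqrt (lam i) * Real.sqrt (lam i) = lam i :=
          Real.mul_self_sqrt (hlam0 i)
        simp only [hg, he, hk, if_false]
        rw [← h2]
        field_simp
        rw [Real.sqrt_sq (Real.sqrt_nonneg _)]
    rw [hee] at h1
    rw [h1, hWee, hWWt]
  have htr : G.trace = tn hS.1 := by
    rw [hG, trace_mul_cycle, hdiag, diagonal_mul_diagonal, trace_diagonal]
    simp only [tn, ← hlam]
    refine Finset.sum_congr rfl fun i _ => ?_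
    by_cases hk : lam i = 0
    · simp [hg, hk]
    · have hlt : 0 < lam i := lt_of_le_of_ne (hlam0 i) (Ne.symm hk)
      have hs : Real.sqrt (lam i) ≠ 0 := ne_of_gt (Real.sqrt_pos.mpr hlt)
      have h2 : Real.sqrt (lam i) * Real.sqrt (lam i) = lam i :=
        Real.mul_self_sqrt (hlam0 i)
      simp only [Pi.mul_apply, hg, hk, if_false]
      rw [← h2]
      field_simp
      rw [Real.sqrt_sq (Real.sqrt_nonneg _)]
  have hfin := trace_eq_tn_of_sq (posSemidef_self_mul_conjTranspose M) hGpsd hGG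
  rw [htr] at hfin
  exact hfin.symm

lemma nn_transpose [DecidableEq m] (M : Matrix m n ℝ) :
    nuclearNorm Mᵀ = nuclearNorm M := by
  have h1 : (Mᵀ)ᴴ * Mᵀ = M * Mᴴ := by
    rw [conjTranspose_eq_transpose_of_trivial, transpose_transpose,
      conjTranspose_eq_transpose_of_trivial]
  rw [nn_eq_tn Mᵀ (posSemidef_conjTranspose_mul_self Mᵀ),
    nn_eq_tn M (posSemidef_conjTranspose_mul_self M)]
  rw [tn_congr h1 _ (by rw [← h1]; exact (posSemidef_conjTranspose_mul_self Mᵀ).1)]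
  exact tn_comm M

lemma mulcancel {a b c : Type*} [Fintype a] [Fintype b] [DecidableEq a] (P : Matrix a b ℝ) (Q : Matrix b a ℝ)
    (h : P * Q = 1) (Y : Matrix a c ℝ) : P * (Q * Y) = Y := by
  rw [← Matrix.mul_assoc, h, Matrix.one_mul]

lemma step {a b k : Type*} [Fintype a] [Fintype b] [Fintype k] [DecidableEq b] [DecidableEq k]
    (V : Matrix a k ℝ) (hV : Vᵀ * V = 1) (W : Matrix a b ℝ) :
    nuclearNorm (V * (Vᵀ * W)) ≤ nuclearNorm W ∧
      (nuclearNorm (V * (Vᵀ * W)) = nuclearNorm W → V * (Vᵀ * W) = W) := by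
  have hcond : (V * (Vᵀ * W))ᴴ * (W - V * (Vᵀ * W)) = 0 := by
    simp only [Matrix.conjTranspose_eq_transpose_of_trivial, Matrix.transpose_mul,
      Matrix.transpose_transpose, Matrix.mul_sub, Matrix.mul_assoc, mulcancel Vᵀ V hV]
    exact sub_self _
  obtain ⟨h1, h2⟩ := nn_le_of_orth W (V * (Vᵀ * W)) hcond
  exact ⟨h1, fun h => (h2 h)⟩

end NNAux

theorem stmt_17 {p m n q : Type*} [Fintype p] [Fintype m] [Fintype n] [Fintype q]
    [DecidableEq m] [DecidableEq n] [DecidableEq q] {rA rB : ℕ}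
    (X : Matrix p q ℝ) (A : Matrix p m ℝ) (B : Matrix n q ℝ)
    (hfeas : ∃ Z : Matrix m n ℝ, X = A * Z * B)
    (UA : Matrix p (Fin rA) ℝ) (σA : Fin rA → ℝ) (VA : Matrix m (Fin rA) ℝ)
    (UB : Matrix n (Fin rB) ℝ) (σB : Fin rB → ℝ) (VB : Matrix q (Fin rB) ℝ)
    (hσA : ∀ i, 0 < σA i) (hσB : ∀ i, 0 < σB i)
    (hUA : UAᵀ * UA = 1) (hVA : VAᵀ * VA = 1)
    (hUB : UBᵀ * UB = 1) (hVB : VBᵀ * VB = 1)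
    (hA : A = UA * Matrix.diagonal σA * VAᵀ)
    (hB : B = UB * Matrix.diagonal σB * VBᵀ) :
    X = A * (VA * (Matrix.diagonal σA)⁻¹ * UAᵀ * X * VB * (Matrix.diagonal σB)⁻¹ * UBᵀ) * B ∧
    (∀ Z : Matrix m n ℝ, X = A * Z * B →
      nuclearNorm (VA * (Matrix.diagonal σA)⁻¹ * UAᵀ * X * VB * (Matrix.diagonal σB)⁻¹ * UBᵀ)
        ≤ nuclearNorm Z) ∧
    (∀ Z : Matrix m n ℝ, X = A * Z * B →
      nuclearNorm Z =
        nuclearNorm (VA * (Matrix.diagonal σA)⁻¹ * UAᵀ * X * VB * (Matrix.diagonal σB)⁻¹ * UBᵀ) →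
      Z = VA * (Matrix.diagonal σA)⁻¹ * UAᵀ * X * VB * (Matrix.diagonal σB)⁻¹ * UBᵀ) := by
  obtain ⟨Z₁, hZ₁⟩ := hfeas
  have hσA' : ∀ i, σA i ≠ 0 := fun i => (hσA i).ne'
  have hσB' : ∀ i, σB i ≠ 0 := fun i => (hσB i).ne'
  have hDA : Matrix.diagonal σA * Matrix.diagonal (fun i => (σA i)⁻¹) = 1 := by
    rw [Matrix.diagonal_mul_diagonal]
    have h : (fun i => σA i * (σA i)⁻¹) = fun _ => (1:ℝ) :=
      funext fun i => mul_inv_cancel₀ (hσA' i)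
    rw [h]; exact Matrix.diagonal_one
  have hDA' : Matrix.diagonal (fun i => (σA i)⁻¹) * Matrix.diagonal σA = 1 := by
    rw [Matrix.diagonal_mul_diagonal]
    have h : (fun i => (σA i)⁻¹ * σA i) = fun _ => (1:ℝ) :=
      funext fun i => inv_mul_cancel₀ (hσA' i)
    rw [h]; exact Matrix.diagonal_one
  have hDB : Matrix.diagonal σB * Matrix.diagonal (fun i => (σB i)⁻¹) = 1 := by
    rw [Matrix.diagonal_mul_diagonal]
    have h : (fun i => σB i * (σB i)⁻¹) = fun _ => (1:ℝ) :=
      funext fun i => mul_inv_cancel₀ (hσB' i)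
    rw [h]; exact Matrix.diagonal_one
  have hDAinv : (Matrix.diagonal σA)⁻¹ = Matrix.diagonal (fun i => (σA i)⁻¹) :=
    Matrix.inv_eq_right_inv hDA
  have hDBinv : (Matrix.diagonal σB)⁻¹ = Matrix.diagonal (fun i => (σB i)⁻¹) :=
    Matrix.inv_eq_right_inv hDB
  have hid : ∀ Z : Matrix m n ℝ, X = A * Z * B →
      VA * (Matrix.diagonal σA)⁻¹ * UAᵀ * X * VB * (Matrix.diagonal σB)⁻¹ * UBᵀ =
        VA * (VAᵀ * (Z * (UB * UBᵀ))) := by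
    intro Z hZ
    rw [hDAinv, hDBinv, hZ, hA, hB]
    simp only [Matrix.mul_assoc, NNAux.mulcancel UAᵀ UA hUA,
      NNAux.mulcancel (Matrix.diagonal fun i => (σA i)⁻¹) (Matrix.diagonal σA) hDA',
      NNAux.mulcancel VBᵀ VB hVB,
      NNAux.mulcancel (Matrix.diagonal σB) (Matrix.diagonal fun i => (σB i)⁻¹) hDB]
  have htrick : ∀ Z : Matrix m n ℝ, Z * (UB * UBᵀ) = (UB * (UBᵀ * Zᵀ))ᵀ := by
    intro Z
    simp only [Matrix.transpose_mul, Matrix.transpose_transpose, Matrix.mul_assoc]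
  refine ⟨?_, ?_, ?_⟩
  · rw [hid Z₁ hZ₁, hZ₁, hA, hB]
    simp only [Matrix.mul_assoc, NNAux.mulcancel VAᵀ VA hVA, NNAux.mulcancel UBᵀ UB hUB]
  · intro Z hZ
    rw [hid Z hZ]
    have s1 := (NNAux.step VA hVA (Z * (UB * UBᵀ))).1
    have s2 : nuclearNorm (Z * (UB * UBᵀ)) ≤ nuclearNorm Z := by
      rw [htrick Z, NNAux.nn_transpose]
      have h3 := (NNAux.step UB hUB Zᵀ).1
      have h4 : nuclearNorm Zᵀ = nuclearNorm Z := NNAux.nn_transpose Z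
      linarith
    linarith
  · intro Z hZ heq
    rw [hid Z hZ] at heq ⊢
    have s1 := NNAux.step VA hVA (Z * (UB * UBᵀ))
    have s2 := NNAux.step UB hUB Zᵀ
    have e1 : nuclearNorm (Z * (UB * UBᵀ)) = nuclearNorm (UB * (UBᵀ * Zᵀ)) := by
      rw [htrick Z, NNAux.nn_transpose]
    have e2 : nuclearNorm Zᵀ = nuclearNorm Z := NNAux.nn_transpose Z
    have h2' : nuclearNorm (Z * (UB * UBᵀ)) ≤ nuclearNorm Z := by
      rw [e1]; linarith [s2.1]
    have hEq1 : nuclearNorm (VA * (VAᵀ * (Z * (UB * UBᵀ)))) = nuclearNorm (Z * (UB * UBᵀ)) := by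
      linarith [s1.1]
    have hPW : VA * (VAᵀ * (Z * (UB * UBᵀ))) = Z * (UB * UBᵀ) := s1.2 hEq1
    have hEq2 : nuclearNorm (UB * (UBᵀ * Zᵀ)) = nuclearNorm Zᵀ := by
      rw [← e1, e2]; linarith [s1.1]
    have hQZ : UB * (UBᵀ * Zᵀ) = Zᵀ := s2.2 hEq2
    have hWZ : Z * (UB * UBᵀ) = Z := by
      have := congrArg Matrix.transpose hQZ
      simpa [Matrix.transpose_mul, Matrix.transpose_transpose, Matrix.mul_assoc] using this
    rw [hPW, hWZ]
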